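/- For any κ-color BBS configuration X with finite support with at least one ball of the maximal color κ and each positive color used exactly once, the capacity-j carrier energy is invariant under the cyclic single-color update: E_j(X) = E_j(T_κ(X)) for all j ≥ 1. -/

import Mathlib

/-- One step of the finite-capacity carrier (circular exclusion rule on the multiset of
carrier entries, `0` denoting an empty slot). -/
noncomputable def capStep (x : Multiset ℕ) (y : ℕ) : Multiset ℕ := by
  classical
  exact if x = 0 then 0
    else if (x.filter fun a => a < y) ≠ 0 then y ::ₘ x.erase ((x.filter fun a => a < y).sup)
    else y ::ₘ x.erase x.sup

/-- The capacity-`c` carrier process over `X`, started from the all-zero carrier. -/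
noncomputable def carrierC (c : ℕ) (X : ℕ → ℕ) : ℕ → Multiset ℕ
  | 0 => Multiset.replicate c 0
  | s + 1 => capStep (carrierC c X s) (X s)

/-- The energy `E_j(X) = ∑_s 1(X(s) > min Γ_{s-1;j})` of the capacity-`j` carrier over `X`. -/
noncomputable def energy (j : ℕ) (X : ℕ → ℕ) : ℕ :=
  Set.ncard {s | ∃ a ∈ carrierC j X s, a < X s}

/-- The number of balls of color `κ` held by the single-color carrier sweeping over `X`
(used to implement the move `K_κ` of all balls of color `κ`). -/
def kcar (κ : ℕ) (X : ℕ → ℕ) : ℕ → ℕ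
  | 0 => 0
  | s + 1 => if X s = κ then kcar κ X s + 1
      else if X s = 0 then kcar κ X s - 1 else kcar κ X s

/-- The configuration after all balls of color `κ` have jumped (the operator `K_κ`). -/
def Kkappa (κ : ℕ) (X : ℕ → ℕ) : ℕ → ℕ := fun s =>
  if X s = κ then 0
  else if X s = 0 then (if 0 < kcar κ X s then κ else 0) else X s

/-- The cyclic update `T_κ`: all balls of color `κ` jump, are relabeled with color `1`,
and every other positive color is increased by `1`. -/
def Tkappa (κ : ℕ) (X : ℕ → ℕ) : ℕ → ℕ := fun s =>
  if Kkappa κ X s = 0 then 0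
  else if Kkappa κ X s = κ then 1 else Kkappa κ X s + 1

namespace Stmt9Aux

open Multiset

/-- Increment positive values, fix `0`. -/
def inc (a : ℕ) : ℕ := if a = 0 then 0 else a + 1

lemma inc_strictMono : StrictMono inc := by
  intro a b h
  unfold inc
  have hb : b ≠ 0 := by omega
  rcases eq_or_ne a 0 with ha | ha <;> simp [ha, hb] <;> omega

lemma inc_lt_inc {a b : ℕ} : inc a < inc b ↔ a < b := inc_strictMono.lt_iff_lt

lemma inc_zero : inc 0 = 0 := rfl

lemma inc_pos {a : ℕ} (h : 0 < a) : inc a = a + 1 := by simp [inc]; omega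

lemma inc_ne_one (a : ℕ) : inc a ≠ 1 := by unfold inc; split <;> omega

lemma sup_mem {m : Multiset ℕ} (h : m ≠ 0) : m.sup ∈ m := by
  induction m using Multiset.induction with
  | empty => exact absurd rfl h
  | cons a s ih =>
    rcases eq_or_ne s 0 with rfl | hs
    · simp
    · rw [Multiset.sup_cons]
      rcases le_total s.sup a with h1 | h1
      · rw [max_eq_left h1]; exact Multiset.mem_cons_self a s
      · rw [max_eq_right h1]; exact Multiset.mem_cons_of_mem (ih hs)

lemma sup_incM (m : Multiset ℕ) : (m.map inc).sup = inc m.sup := by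
  induction m using Multiset.induction with
  | empty => simp [inc_zero]
  | cons a s ih =>
    rw [Multiset.map_cons, Multiset.sup_cons, Multiset.sup_cons, ih,
      inc_strictMono.monotone.map_max]

lemma filter_incM (m : Multiset ℕ) (y : ℕ) :
    (m.map inc).filter (fun b => b < inc y) = (m.filter (fun a => a < y)).map inc := by
  rw [Multiset.filter_map]
  congr 1
  exact Multiset.filter_congr (fun a _ => by simp [Function.comp, inc_lt_inc])

lemma erase_incM (m : Multiset ℕ) (a : ℕ) :
    (m.map inc).erase (inc a) = (m.erase a).map inc :=
  (Multiset.map_erase inc inc_strictMono.injective a m).symm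

lemma exists_lt_incM {m : Multiset ℕ} {y : ℕ} :
    (∃ b ∈ m.map inc, b < inc y) ↔ ∃ a ∈ m, a < y := by
  constructor
  · rintro ⟨b, hb, hlt⟩
    obtain ⟨a, ha, rfl⟩ := Multiset.mem_map.1 hb
    exact ⟨a, ha, inc_lt_inc.1 hlt⟩
  · rintro ⟨a, ha, h⟩
    exact ⟨inc a, Multiset.mem_map_of_mem _ ha, inc_lt_inc.2 h⟩

end Stmt9Aux

namespace Stmt9Aux

lemma capStep_pos (x : Multiset ℕ) (y : ℕ) (hx : x ≠ 0)
    (h : (x.filter fun a => a < y) ≠ 0) :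
    capStep x y = y ::ₘ x.erase ((x.filter fun a => a < y).sup) := by
  unfold capStep; rw [if_neg hx, if_pos h]

lemma capStep_neg (x : Multiset ℕ) (y : ℕ) (hx : x ≠ 0)
    (h : (x.filter fun a => a < y) = 0) :
    capStep x y = y ::ₘ x.erase x.sup := by
  unfold capStep; rw [if_neg hx, if_neg (not_ne_iff.mpr h)]

lemma capStep_ne_zero (x : Multiset ℕ) (y : ℕ) (hx : x ≠ 0) : capStep x y ≠ 0 := by
  by_cases h : (x.filter fun a => a < y) = 0
  · rw [capStep_neg x y hx h]; exact Multiset.cons_ne_zero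
  · rw [capStep_pos x y hx h]; exact Multiset.cons_ne_zero

lemma mem_capStep {x : Multiset ℕ} {y b : ℕ} (hx : x ≠ 0) (hb : b ∈ capStep x y) :
    b = y ∨ b ∈ x := by
  by_cases h : (x.filter fun a => a < y) = 0
  · rw [capStep_neg x y hx h] at hb
    rcases Multiset.mem_cons.1 hb with h1 | h1
    · exact Or.inl h1
    · exact Or.inr (Multiset.mem_of_mem_erase h1)
  · rw [capStep_pos x y hx h] at hb
    rcases Multiset.mem_cons.1 hb with h1 | h1
    · exact Or.inl h1
    · exact Or.inr (Multiset.mem_of_mem_erase h1)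

/-- Generic coupling step: `capStep` commutes with `inc`. -/
lemma capStep_incM (m : Multiset ℕ) (hm : m ≠ 0) (y : ℕ) :
    capStep (m.map inc) (inc y) = (capStep m y).map inc := by
  have hm' : m.map inc ≠ 0 := by simpa using hm
  by_cases h : (m.filter fun a => a < y) = 0
  · have h' : ((m.map inc).filter fun b => b < inc y) = 0 := by
      rw [filter_incM, h]; rfl
    rw [capStep_neg _ _ hm' h', capStep_neg _ _ hm h, Multiset.map_cons,
      sup_incM, erase_incM]
  · have h' : ((m.map inc).filter fun b => b < inc y) ≠ 0 := by
      rw [filter_incM]; simpa using h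
    rw [capStep_pos _ _ hm' h', capStep_pos _ _ hm h, Multiset.map_cons,
      filter_incM, sup_incM, erase_incM]

lemma erase_cons_zero_incM {n : Multiset ℕ} {M : ℕ} (hM : M ∈ n) :
    (0 ::ₘ n.map inc).erase (inc M) = 0 ::ₘ (n.erase M).map inc := by
  rcases eq_or_ne M 0 with rfl | h0
  · rw [inc_zero, Multiset.erase_cons_head]
    conv_lhs => rw [← Multiset.cons_erase hM]
    rw [Multiset.map_cons, inc_zero]
  · have : (0:ℕ) ≠ inc M := by unfold inc; split <;> omega
    rw [Multiset.erase_cons_tail _ this, erase_incM]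

/-- The step at position `p` (pick-up of the `κ`-ball vs. empty input). -/
lemma step_p {κ : ℕ} (m : Multiset ℕ) (hm : m ≠ 0) (hlt : ∀ a ∈ m, a < κ) :
    capStep m κ = κ ::ₘ m.erase m.sup ∧
    capStep (m.map inc) 0 = 0 ::ₘ (m.erase m.sup).map inc ∧
    (∃ a ∈ m, a < κ) ∧ ¬(∃ b ∈ m.map inc, b < 0) := by
  have hm' : m.map inc ≠ 0 := by simpa using hm
  have hf : (m.filter fun a => a < κ) = m := Multiset.filter_eq_self.2 hlt
  have hfne : (m.filter fun a => a < κ) ≠ 0 := by rw [hf]; exact hm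
  have hT : ((m.map inc).filter fun a => a < 0) = 0 :=
    Multiset.filter_eq_nil.2 (fun a _ => by omega)
  refine ⟨?_, ?_, ?_, ?_⟩
  · rw [capStep_pos _ _ hm hfne, hf]
  · rw [capStep_neg _ _ hm' hT, sup_incM, erase_incM]
  · obtain ⟨a, ha⟩ := Multiset.exists_mem_of_ne_zero hm
    exact ⟨a, ha, hlt a ha⟩
  · rintro ⟨b, _, hb⟩; omega

/-- `B`-state step, case (i): the carrier exchanges a small ball. -/
lemma step_B_pos {κ : ℕ} (n : Multiset ℕ) (c : ℕ) (hc : 0 < c) (hcκ : c ≤ κ)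
    (h : (n.filter fun a => a < c) ≠ 0) :
    capStep (κ ::ₘ n) c = κ ::ₘ c ::ₘ n.erase ((n.filter fun a => a < c).sup) ∧
    capStep (0 ::ₘ n.map inc) (c + 1) =
      0 ::ₘ (c + 1) ::ₘ (n.erase ((n.filter fun a => a < c).sup)).map inc ∧
    (∃ a ∈ κ ::ₘ n, a < c) ∧ (∃ b ∈ 0 ::ₘ n.map inc, b < c + 1) := by
  set M := (n.filter fun a => a < c).sup with hMdef
  have hMmem : M ∈ n.filter fun a => a < c := sup_mem h
  have hMn : M ∈ n := Multiset.mem_of_mem_filter hMmem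
  have hMc : M < c := by
    have := Multiset.of_mem_filter hMmem
    simpa using this
  have hfX : ((κ ::ₘ n).filter fun a => a < c) = n.filter fun a => a < c := by
    rw [Multiset.filter_cons_of_neg _ (by omega)]
  have hfXne : ((κ ::ₘ n).filter fun a => a < c) ≠ 0 := by rw [hfX]; exact h
  have hincc : inc c = c + 1 := inc_pos hc
  have hfT : ((0 ::ₘ n.map inc).filter fun a => a < c + 1)
      = 0 ::ₘ ((n.filter fun a => a < c).map inc) := by
    rw [Multiset.filter_cons_of_pos _ (by omega), ← hincc, filter_incM]
  have hfTne : ((0 ::ₘ n.map inc).filter fun a => a < c + 1) ≠ 0 := by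
    rw [hfT]; exact Multiset.cons_ne_zero
  have hsupT : ((0 ::ₘ n.map inc).filter fun a => a < c + 1).sup = inc M := by
    rw [hfT, Multiset.sup_cons, sup_incM, hMdef, max_eq_right (Nat.zero_le _)]
  refine ⟨?_, ?_, ⟨M, Multiset.mem_cons_of_mem hMn, hMc⟩,
    ⟨0, Multiset.mem_cons_self _ _, by omega⟩⟩
  · rw [capStep_pos _ _ (Multiset.cons_ne_zero) hfXne, hfX, ← hMdef,
      Multiset.erase_cons_tail _ (show κ ≠ M by omega), Multiset.cons_swap]
  · rw [capStep_pos _ _ (Multiset.cons_ne_zero) hfTne, hsupT,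
      erase_cons_zero_incM hMn, Multiset.cons_swap]


/-- `B`-state step, case (ii): the carrier drops the `κ`-ball early. -/
lemma step_B_neg {κ : ℕ} (n : Multiset ℕ) (c : ℕ) (hc : 0 < c) (hcκ : c ≤ κ)
    (hn : ∀ a ∈ n, a ≤ κ)
    (h : (n.filter fun a => a < c) = 0) :
    capStep (κ ::ₘ n) c = c ::ₘ n ∧
    capStep (0 ::ₘ n.map inc) (c + 1) = (c + 1) ::ₘ n.map inc ∧
    ¬(∃ a ∈ κ ::ₘ n, a < c) ∧ (∃ b ∈ 0 ::ₘ n.map inc, b < c + 1) := by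
  have hincc : inc c = c + 1 := inc_pos hc
  have hfX : ((κ ::ₘ n).filter fun a => a < c) = 0 := by
    rw [Multiset.filter_cons_of_neg _ (by omega), h]
  have hsupX : (κ ::ₘ n).sup = κ := by
    rw [Multiset.sup_cons, max_eq_left (Multiset.sup_le.2 hn)]
  have hfT : ((0 ::ₘ n.map inc).filter fun a => a < c + 1) = 0 ::ₘ (0 : Multiset ℕ) := by
    rw [Multiset.filter_cons_of_pos _ (by omega), ← hincc, filter_incM, h]; rfl
  have hfTne : ((0 ::ₘ n.map inc).filter fun a => a < c + 1) ≠ 0 := by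
    rw [hfT]; exact Multiset.cons_ne_zero
  have hsupT : ((0 ::ₘ n.map inc).filter fun a => a < c + 1).sup = 0 := by
    rw [hfT]; rfl
  refine ⟨?_, ?_, ?_, ⟨0, Multiset.mem_cons_self _ _, by omega⟩⟩
  · rw [capStep_neg _ _ (Multiset.cons_ne_zero) hfX, hsupX, Multiset.erase_cons_head]
  · rw [capStep_pos _ _ (Multiset.cons_ne_zero) hfTne, hsupT, Multiset.erase_cons_head]
  · rintro ⟨a, ha, hac⟩
    rcases Multiset.mem_cons.1 ha with rfl | ha'
    · omega
    · have : a ∈ n.filter fun a => a < c := Multiset.mem_filter.2 ⟨ha', hac⟩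
      rw [h] at this; exact absurd this (Multiset.notMem_zero a)

/-- `B`-state step at position `q` (drop at the empty box). -/
lemma step_B_q {κ : ℕ} (n : Multiset ℕ) (hn : ∀ a ∈ n, a ≤ κ) :
    capStep (κ ::ₘ n) 0 = 0 ::ₘ n ∧
    capStep (0 ::ₘ n.map inc) 1 = 1 ::ₘ n.map inc ∧
    ¬(∃ a ∈ κ ::ₘ n, a < 0) ∧ (∃ b ∈ 0 ::ₘ n.map inc, b < 1) := by
  have hfX : ((κ ::ₘ n).filter fun a => a < 0) = 0 :=
    Multiset.filter_eq_nil.2 (fun a _ => by omega)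
  have hsupX : (κ ::ₘ n).sup = κ := by
    rw [Multiset.sup_cons, max_eq_left (Multiset.sup_le.2 hn)]
  have hfT : ((0 ::ₘ n.map inc).filter fun a => a < 1)
      = 0 ::ₘ ((n.map inc).filter fun a => a < 1) := by
    rw [Multiset.filter_cons_of_pos _ (by omega)]
  have hfTne : ((0 ::ₘ n.map inc).filter fun a => a < 1) ≠ 0 := by
    rw [hfT]; exact Multiset.cons_ne_zero
  have hsupT : ((0 ::ₘ n.map inc).filter fun a => a < 1).sup = 0 := by
    refine Nat.le_antisymm (Multiset.sup_le.2 fun b hb => ?_) (Nat.zero_le _)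
    have := Multiset.of_mem_filter hb; omega
  refine ⟨?_, ?_, by rintro ⟨a, _, ha⟩; omega,
    ⟨0, Multiset.mem_cons_self _ _, by omega⟩⟩
  · rw [capStep_neg _ _ (Multiset.cons_ne_zero) hfX, hsupX, Multiset.erase_cons_head]
  · rw [capStep_pos _ _ (Multiset.cons_ne_zero) hfTne, hsupT, Multiset.erase_cons_head]

/-- mid-`INC` state step at position `q`: all carrier entries positive. -/
lemma step_midINC_q (m : Multiset ℕ) (hm : m ≠ 0) (hpos : ∀ a ∈ m, 0 < a) :
    capStep m 0 = 0 ::ₘ m.erase m.sup ∧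
    capStep (m.map inc) 1 = 1 ::ₘ (m.erase m.sup).map inc ∧
    ¬(∃ a ∈ m, a < 0) ∧ ¬(∃ b ∈ m.map inc, b < 1) := by
  have hm' : m.map inc ≠ 0 := by simpa using hm
  have hfX : (m.filter fun a => a < 0) = 0 :=
    Multiset.filter_eq_nil.2 (fun a _ => by omega)
  have hfT : ((m.map inc).filter fun b => b < 1) = 0 := by
    refine Multiset.filter_eq_nil.2 (fun b hb => ?_)
    obtain ⟨a, ha, rfl⟩ := Multiset.mem_map.1 hb
    have := hpos a ha
    rw [inc_pos this]; omega
  refine ⟨?_, ?_, by rintro ⟨a, _, h⟩; omega, ?_⟩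
  · rw [capStep_neg _ _ hm hfX]
  · rw [capStep_neg _ _ hm' hfT, sup_incM, erase_incM]
  · rintro ⟨b, hb, h1⟩
    obtain ⟨a, ha, rfl⟩ := Multiset.mem_map.1 hb
    have := hpos a ha
    rw [inc_pos this] at h1; omega

end Stmt9Aux

namespace Stmt9Aux

/-- `C`-state step on an empty input box. -/
lemma step_C_zero (m : Multiset ℕ) :
    ¬(∃ a ∈ (0 ::ₘ m), a < 0) ∧ ¬(∃ b ∈ (1 ::ₘ m.map inc), b < 0) ∧
    ((capStep (0 ::ₘ m) 0 = 0 ::ₘ m ∧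
        capStep (1 ::ₘ m.map inc) 0 = (0 ::ₘ m).map inc) ∨
      (∃ m', capStep (0 ::ₘ m) 0 = 0 ::ₘ m' ∧
        capStep (1 ::ₘ m.map inc) 0 = 1 ::ₘ m'.map inc)) := by
  have hfX : ((0 ::ₘ m).filter fun a => a < 0) = 0 :=
    Multiset.filter_eq_nil.2 (fun a _ => by omega)
  have hfT : ((1 ::ₘ m.map inc).filter fun a => a < 0) = 0 :=
    Multiset.filter_eq_nil.2 (fun a _ => by omega)
  refine ⟨by rintro ⟨a, _, h⟩; omega, by rintro ⟨b, _, h⟩; omega, ?_⟩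
  rcases Nat.eq_zero_or_pos m.sup with hM | hM
  · left
    constructor
    · have hs : (0 ::ₘ m).sup = 0 := by simp [Multiset.sup_cons, hM]
      rw [capStep_neg _ _ (Multiset.cons_ne_zero) hfX, hs, Multiset.erase_cons_head]
    · have hs : (1 ::ₘ m.map inc).sup = 1 := by
        simp [Multiset.sup_cons, sup_incM, hM, inc_zero]
      rw [capStep_neg _ _ (Multiset.cons_ne_zero) hfT, hs, Multiset.erase_cons_head,
        Multiset.map_cons, inc_zero]
  · right
    refine ⟨0 ::ₘ m.erase m.sup, ?_, ?_⟩
    · have hs : (0 ::ₘ m).sup = m.sup := by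
        rw [Multiset.sup_cons, max_eq_right (Nat.zero_le _)]
      rw [capStep_neg _ _ (Multiset.cons_ne_zero) hfX, hs,
        Multiset.erase_cons_tail _ (by omega : (0:ℕ) ≠ m.sup)]
    · have h1 : (1 ::ₘ m.map inc).sup = inc m.sup := by
        rw [Multiset.sup_cons, sup_incM, inc_pos hM]
        omega
      rw [capStep_neg _ _ (Multiset.cons_ne_zero) hfT, h1,
        Multiset.erase_cons_tail _ (Ne.symm (inc_ne_one m.sup)), erase_incM,
        Multiset.map_cons, inc_zero, Multiset.cons_swap]

/-- `C`-state step on a nonempty input box. -/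
lemma step_C_pos (m : Multiset ℕ) (c : ℕ) (hc : 0 < c) :
    (∃ a ∈ (0 ::ₘ m), a < c) ∧ (∃ b ∈ (1 ::ₘ m.map inc), b < c + 1) ∧
    ((capStep (0 ::ₘ m) c = (c ::ₘ m) ∧
        capStep (1 ::ₘ m.map inc) (c + 1) = (c ::ₘ m).map inc) ∨
      (∃ m', capStep (0 ::ₘ m) c = 0 ::ₘ m' ∧
        capStep (1 ::ₘ m.map inc) (c + 1) = 1 ::ₘ m'.map inc)) := by
  have hincc : inc c = c + 1 := inc_pos hc
  set F := m.filter fun a => a < c with hF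
  have hfX : ((0 ::ₘ m).filter fun a => a < c) = 0 ::ₘ F := by
    rw [Multiset.filter_cons_of_pos (p := fun a => a < c) _ hc]
  have hfXne : ((0 ::ₘ m).filter fun a => a < c) ≠ 0 := by
    rw [hfX]; exact Multiset.cons_ne_zero
  have hsX : ((0 ::ₘ m).filter fun a => a < c).sup = F.sup := by
    rw [hfX, Multiset.sup_cons, max_eq_right (Nat.zero_le _)]
  have hfT : ((1 ::ₘ m.map inc).filter fun b => b < c + 1) = 1 ::ₘ F.map inc := by
    rw [Multiset.filter_cons_of_pos _ (by omega), ← hincc, filter_incM]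
  have hfTne : ((1 ::ₘ m.map inc).filter fun b => b < c + 1) ≠ 0 := by
    rw [hfT]; exact Multiset.cons_ne_zero
  have hsT : ((1 ::ₘ m.map inc).filter fun b => b < c + 1).sup = 1 ⊔ inc F.sup := by
    rw [hfT, Multiset.sup_cons, sup_incM]
  refine ⟨⟨0, Multiset.mem_cons_self _ _, hc⟩,
    ⟨1, Multiset.mem_cons_self _ _, by omega⟩, ?_⟩
  rcases Nat.eq_zero_or_pos F.sup with hM | hM
  · left
    constructor
    · rw [capStep_pos _ _ (Multiset.cons_ne_zero) hfXne, hsX, hM,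
        Multiset.erase_cons_head]
    · rw [capStep_pos _ _ (Multiset.cons_ne_zero) hfTne, hsT, hM, inc_zero,
        (by omega : (1:ℕ) ⊔ 0 = 1), Multiset.erase_cons_head,
        Multiset.map_cons, hincc]
  · right
    have hFne : F ≠ 0 := by
      intro h0; rw [h0] at hM; simp at hM
    have hMF : F.sup ∈ F := sup_mem hFne
    have hMm : F.sup ∈ m := Multiset.mem_of_mem_filter hMF
    have hMc : F.sup < c := by have := Multiset.of_mem_filter hMF; simpa using this
    refine ⟨c ::ₘ m.erase F.sup, ?_, ?_⟩
    · rw [capStep_pos _ _ (Multiset.cons_ne_zero) hfXne, hsX,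
        Multiset.erase_cons_tail _ (by omega : (0:ℕ) ≠ F.sup),
        Multiset.cons_swap]
    · rw [capStep_pos _ _ (Multiset.cons_ne_zero) hfTne, hsT, inc_pos hM,
        (by omega : (1:ℕ) ⊔ (F.sup + 1) = F.sup + 1), ← inc_pos hM,
        Multiset.erase_cons_tail _ (Ne.symm (inc_ne_one F.sup)), erase_incM,
        Multiset.map_cons, hincc, Multiset.cons_swap]

end Stmt9Aux

namespace Stmt9Aux

lemma carrierC_succ (c : ℕ) (X : ℕ → ℕ) (s : ℕ) :
    carrierC c X (s + 1) = capStep (carrierC c X s) (X s) := rfl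

lemma carrierC_ne_zero (c : ℕ) (hc : 1 ≤ c) (X : ℕ → ℕ) (s : ℕ) :
    carrierC c X s ≠ 0 := by
  induction s with
  | zero =>
    show Multiset.replicate c 0 ≠ 0
    intro h
    have h2 : (Multiset.replicate c (0:ℕ)).card = 0 := by rw [h]; rfl
    rw [Multiset.card_replicate] at h2
    omega
  | succ s ih => exact capStep_ne_zero _ _ ih

open scoped Classical in
/-- Partial counts of the energy indicator. -/
noncomputable def cnt (j : ℕ) (Z : ℕ → ℕ) : ℕ → ℕ
  | 0 => 0
  | s + 1 => cnt j Z s + (if ∃ a ∈ carrierC j Z s, a < Z s then 1 else 0)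

open scoped Classical in
lemma cnt_eq_card (j : ℕ) (Z : ℕ → ℕ) (n : ℕ) :
    cnt j Z n = ((Finset.range n).filter
      (fun s => ∃ a ∈ carrierC j Z s, a < Z s)).card := by
  induction n with
  | zero => rfl
  | succ n ih =>
    rw [Finset.range_add_one, Finset.filter_insert]
    by_cases h : ∃ a ∈ carrierC j Z n, a < Z n
    · rw [if_pos h, Finset.card_insert_of_notMem (by simp)]
      show cnt j Z n + _ = _
      rw [if_pos h, ih]
    · rw [if_neg h]
      show cnt j Z n + _ = _
      rw [if_neg h, ih, add_zero]

open scoped Classical in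
lemma energy_eq_cnt (j : ℕ) (Z : ℕ → ℕ) (N : ℕ)
    (h : ∀ s, (∃ a ∈ carrierC j Z s, a < Z s) → s < N) :
    energy j Z = cnt j Z N := by
  rw [cnt_eq_card]
  unfold energy
  have : {s | ∃ a ∈ carrierC j Z s, a < Z s}
      = ↑((Finset.range N).filter (fun s => ∃ a ∈ carrierC j Z s, a < Z s)) := by
    ext s
    simp only [Set.mem_setOf_eq, Finset.coe_filter, Finset.mem_range]
    exact ⟨fun hs => ⟨h s hs, hs⟩, fun hs => hs.2⟩
  rw [this, Set.ncard_coe_finset]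

end Stmt9Aux

namespace Stmt9Aux

open scoped Classical in
lemma cnt_succ (j : ℕ) (Z : ℕ → ℕ) (s : ℕ) :
    cnt j Z (s + 1) = cnt j Z s + (if ∃ a ∈ carrierC j Z s, a < Z s then 1 else 0) := by
  rfl

end Stmt9Aux


open Stmt9Aux

/-- For a κ-color BBS configuration `X` with finite support, with at least
one ball of the maximal color `κ` and each positive color used exactly once, the
capacity-`j` carrier energy is invariant under the cyclic single-color update:
`E_j(X) = E_j(T_κ(X))` for all `j ≥ 1`. -/
theorem stmt9 (κ : ℕ) (X : ℕ → ℕ) (hfin : (Function.support X).Finite)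
    (hcol : ∀ s, X s ≤ κ)
    (hstd : ∀ c, 1 ≤ c → c ≤ κ → ∃! s, X s = c)
    (j : ℕ) (hj : 1 ≤ j) :
    energy j X = energy j (Tkappa κ X) := by
  classical
  rcases Nat.eq_zero_or_pos κ with rfl | hκ
  · -- trivial case `κ = 0`: the configuration is empty and `T` fixes it
    have hX0 : ∀ s, X s = 0 := fun s => Nat.le_zero.mp (hcol s)
    have hT : Tkappa 0 X = X := by
      funext s
      simp [Tkappa, Kkappa, hX0 s]
    rw [hT]
  set Y := Tkappa κ X with hYdef
  -- the position `p` of the unique ball of color `κ`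
  obtain ⟨p, hp, hpu⟩ := hstd κ hκ le_rfl
  -- a bound `B` beyond which `X` vanishes
  obtain ⟨B, hB⟩ : ∃ B, ∀ s, B < s → X s = 0 := by
    obtain ⟨B, hB⟩ := hfin.bddAbove
    refine ⟨B, fun s hs => ?_⟩
    by_contra h
    exact absurd (hB (Function.mem_support.2 h)) (by omega)
  -- the landing position `q`: the first empty box to the right of `p`
  have hqex : ∃ t, X (p + 1 + t) = 0 := ⟨B, hB _ (by omega)⟩
  set q := p + 1 + Nat.find hqex with hqdef
  have hq0 : X q = 0 := Nat.find_spec hqex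
  have hpq : p < q := by omega
  have hmid : ∀ s, p < s → s < q → X s ≠ 0 := by
    intro s h1 h2
    have h3 := Nat.find_min hqex (m := s - (p + 1)) (by omega)
    have hidx : p + 1 + (s - (p + 1)) = s := by omega
    rwa [hidx] at h3
  -- the value of the single-color carrier count
  have hkcar : ∀ s, kcar κ X s = if p < s ∧ s ≤ q then 1 else 0 := by
    intro s
    induction s with
    | zero => simp [kcar]
    | succ s ih =>
      show (if X s = κ then kcar κ X s + 1
        else if X s = 0 then kcar κ X s - 1 else kcar κ X s) = _
      rw [ih]
      by_cases h1 : X s = κ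
      · have hsp : s = p := hpu s h1
        subst hsp
        rw [if_pos h1, if_neg (by omega : ¬(s < s ∧ s ≤ q)),
          if_pos (⟨by omega, by omega⟩ : s < s + 1 ∧ s + 1 ≤ q)]
      · rw [if_neg h1]
        have hsp : s ≠ p := fun h => h1 (h ▸ hp)
        by_cases h2 : X s = 0
        · rw [if_pos h2]
          have hnm : ¬(p < s ∧ s < q) := fun ⟨a, b⟩ => hmid s a b h2
          split_ifs <;> omega
        · rw [if_neg h2]
          have hsq : s ≠ q := fun h => h2 (h ▸ hq0)
          split_ifs <;> omega
  -- description of the updated configuration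
  have hYp : Y p = 0 := by
    simp [hYdef, Tkappa, Kkappa, hp]
  have hYq : Y q = 1 := by
    have hk : kcar κ X q = 1 := by rw [hkcar, if_pos ⟨hpq, le_rfl⟩]
    have hXq : X q ≠ κ := by rw [hq0]; omega
    show (if Kkappa κ X q = 0 then 0 else if Kkappa κ X q = κ then 1 else Kkappa κ X q + 1) = 1
    have hK : Kkappa κ X q = κ := by
      show (if X q = κ then 0 else if X q = 0 then (if 0 < kcar κ X q then κ else 0) else X q) = κ
      rw [if_neg hXq, if_pos hq0, if_pos (by omega)]
    rw [hK, if_neg (by omega : ¬κ = 0), if_pos rfl]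
  have hYother : ∀ s, s ≠ p → s ≠ q → Y s = inc (X s) := by
    intro s hsp hsq
    have hXκ : X s ≠ κ := fun h => hsp (hpu s h)
    have hK : Kkappa κ X s = X s := by
      show (if X s = κ then 0 else if X s = 0 then (if 0 < kcar κ X s then κ else 0) else X s) = X s
      rw [if_neg hXκ]
      by_cases h0 : X s = 0
      · rw [if_pos h0]
        have hk0 : ¬0 < kcar κ X s := by
          rw [hkcar]
          split_ifs with h
          · exact absurd (hmid s h.1 (lt_of_le_of_ne h.2 hsq)) (fun hh => hh h0)
          · omega
        rw [if_neg hk0, h0]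
      · rw [if_neg h0]
    show (if Kkappa κ X s = 0 then 0 else if Kkappa κ X s = κ then 1 else Kkappa κ X s + 1) = _
    rw [hK]
    by_cases h0 : X s = 0
    · rw [if_pos h0, h0, inc_zero]
    · rw [if_neg h0, if_neg hXκ, inc_pos (Nat.pos_of_ne_zero h0)]
  -- a common horizon
  set N := B + q + 2 with hNdef
  have hXN : ∀ s, N ≤ s → X s = 0 := fun s hs => hB s (by omega)
  have hYN : ∀ s, N ≤ s → Y s = 0 := by
    intro s hs
    rw [hYother s (by omega) (by omega), hXN s hs, inc_zero]
  -- the carrier coupling invariant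
  have key : ∀ s,
      (s ≤ p ∧ carrierC j Y s = (carrierC j X s).map inc ∧
        (∀ a ∈ carrierC j X s, a < κ) ∧ cnt j Y s = cnt j X s) ∨
      (p < s ∧ s ≤ q ∧ (∃ n, carrierC j X s = κ ::ₘ n ∧ (∀ a ∈ n, a < κ) ∧
        carrierC j Y s = 0 ::ₘ n.map inc) ∧ cnt j X s = cnt j Y s + 1) ∨
      (p < s ∧ s ≤ q ∧ carrierC j Y s = (carrierC j X s).map inc ∧
        (∀ a ∈ carrierC j X s, 0 < a) ∧ cnt j Y s = cnt j X s) ∨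
      (q < s ∧ (∃ m, carrierC j X s = 0 ::ₘ m ∧ carrierC j Y s = 1 ::ₘ m.map inc) ∧
        cnt j Y s = cnt j X s) ∨
      (q < s ∧ carrierC j Y s = (carrierC j X s).map inc ∧ cnt j Y s = cnt j X s) := by
    intro s
    induction s with
    | zero =>
      left
      refine ⟨Nat.zero_le _, ?_, ?_, rfl⟩
      · show Multiset.replicate j 0 = (Multiset.replicate j 0).map inc
        rw [Multiset.map_replicate, inc_zero]
      · intro a ha
        have := Multiset.eq_of_mem_replicate (show a ∈ Multiset.replicate j 0 from ha)
        omega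
    | succ s ih =>
      have hXne : carrierC j X s ≠ 0 := carrierC_ne_zero j hj X s
      rcases ih with ⟨hsp, hmap, hbound, hc⟩ | ⟨h1, h2, ⟨n, hXn, hn, hYn⟩, hc⟩ |
        ⟨h1, h2, hmap, hpos, hc⟩ | ⟨h1, ⟨m, hXm, hYm⟩, hc⟩ | ⟨h1, hmap, hc⟩
      · -- pre phase
        rcases lt_or_eq_of_le hsp with hlt | rfl
        · -- ordinary pre step
          have hYs : Y s = inc (X s) := hYother s (by omega) (by omega)
          left
          refine ⟨by omega, ?_, ?_, ?_⟩
          · rw [carrierC_succ, carrierC_succ, hmap, hYs, capStep_incM _ hXne]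
          · intro a ha
            rcases mem_capStep hXne ha with rfl | hmem
            · have hle := hcol s
              have hne : X s ≠ κ := fun h => absurd (hpu s h) (by omega)
              omega
            · exact hbound a hmem
          · rw [cnt_succ, cnt_succ, hc]
            congr 1
            refine if_congr ?_ rfl rfl
            rw [hmap, hYs]
            exact exists_lt_incM
        · -- the step at `p`: pick-up of the `κ`-ball
          obtain ⟨e1, e2, e3, e4⟩ := step_p (κ := κ) (carrierC j X s) hXne hbound
          right; left
          refine ⟨by omega, by omega,
            ⟨(carrierC j X s).erase (carrierC j X s).sup, ?_, ?_, ?_⟩, ?_⟩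
          · rw [carrierC_succ, hp, e1]
          · exact fun a ha => hbound a (Multiset.mem_of_mem_erase ha)
          · rw [carrierC_succ, hmap, hYp, e2]
          · rw [cnt_succ, cnt_succ, hc]
            rw [if_pos (by rw [hp]; exact e3), if_neg (by rw [hmap, hYp]; exact e4)]
      · -- `B` phase
        rcases lt_or_eq_of_le h2 with hlt | rfl
        · -- a step strictly between `p` and `q`
          have hc0 : 0 < X s := Nat.pos_of_ne_zero (hmid s h1 hlt)
          have hcκ : X s < κ :=
            lt_of_le_of_ne (hcol s) (fun h => absurd (hpu s h) (by omega))
          have hYs : Y s = X s + 1 := by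
            rw [hYother s (by omega) (by omega), inc_pos hc0]
          by_cases hf : (n.filter fun a => a < X s) = 0
          · -- the carrier drops the `κ`-ball early
            obtain ⟨e1, e2, e3, e4⟩ :=
              step_B_neg (κ := κ) n (X s) hc0 (le_of_lt hcκ)
                (fun a ha => le_of_lt (hn a ha)) hf
            right; right; left
            refine ⟨by omega, by omega, ?_, ?_, ?_⟩
            · rw [carrierC_succ, carrierC_succ, hXn, hYn, hYs, e1, e2,
                Multiset.map_cons, inc_pos hc0]
            · intro a ha
              rw [carrierC_succ, hXn, e1] at ha
              rcases Multiset.mem_cons.1 ha with rfl | hmem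
              · exact hc0
              · have := Multiset.filter_eq_nil.1 hf a hmem
                omega
            · rw [cnt_succ, cnt_succ]
              rw [if_pos (by rw [hYn, hYs]; exact e4), if_neg (by rw [hXn]; exact e3)]
              omega
          · -- the carrier exchanges a smaller ball
            obtain ⟨e1, e2, e3, e4⟩ :=
              step_B_pos (κ := κ) n (X s) hc0 (le_of_lt hcκ) hf
            right; left
            refine ⟨by omega, by omega,
              ⟨X s ::ₘ n.erase ((n.filter fun a => a < X s).sup), ?_, ?_, ?_⟩, ?_⟩
            · rw [carrierC_succ, hXn, e1]
            · intro a ha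
              rcases Multiset.mem_cons.1 ha with rfl | hmem
              · exact hcκ
              · exact hn a (Multiset.mem_of_mem_erase hmem)
            · rw [carrierC_succ, hYn, hYs, e2, Multiset.map_cons, inc_pos hc0]
            · rw [cnt_succ, cnt_succ]
              rw [if_pos (by rw [hXn]; exact e3), if_pos (by rw [hYn, hYs]; exact e4)]
              omega
        · -- the step at `q` from the `B` state: the `κ`-ball is dropped
          obtain ⟨e1, e2, e3, e4⟩ :=
            step_B_q (κ := κ) n (fun a ha => le_of_lt (hn a ha))
          right; right; right; left
          refine ⟨by omega, ⟨n, ?_, ?_⟩, ?_⟩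
          · rw [carrierC_succ, hXn, hq0, e1]
          · rw [carrierC_succ, hYn, hYq, e2]
          · rw [cnt_succ, cnt_succ]
            rw [if_pos (by rw [hYn, hYq]; exact e4), if_neg (by rw [hXn, hq0]; exact e3)]
            omega
      · -- mid-`INC` phase
        rcases lt_or_eq_of_le h2 with hlt | rfl
        · -- a step strictly between `p` and `q`
          have hc0 : 0 < X s := Nat.pos_of_ne_zero (hmid s h1 hlt)
          have hYs : Y s = inc (X s) := hYother s (by omega) (by omega)
          right; right; left
          refine ⟨by omega, by omega, ?_, ?_, ?_⟩
          · rw [carrierC_succ, carrierC_succ, hmap, hYs, capStep_incM _ hXne]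
          · intro a ha
            rcases mem_capStep hXne ha with rfl | hmem
            · exact hc0
            · exact hpos a hmem
          · rw [cnt_succ, cnt_succ, hc]
            congr 1
            refine if_congr ?_ rfl rfl
            rw [hmap, hYs]
            exact exists_lt_incM
        · -- the step at `q` from the mid-`INC` state
          obtain ⟨e1, e2, e3, e4⟩ := step_midINC_q (carrierC j X q) hXne hpos
          right; right; right; left
          refine ⟨by omega, ⟨(carrierC j X q).erase (carrierC j X q).sup, ?_, ?_⟩, ?_⟩
          · rw [carrierC_succ, hq0, e1]
          · rw [carrierC_succ, hmap, hYq, e2]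
          · rw [cnt_succ, cnt_succ, hc]
            rw [if_neg (by rw [hYq, hmap]; exact e4), if_neg (by rw [hq0]; exact e3)]
      · -- `C` phase
        have hYs : Y s = inc (X s) := hYother s (by omega) (by omega)
        by_cases h0 : X s = 0
        · obtain ⟨e3, e4, ecase⟩ := step_C_zero m
          rcases ecase with ⟨e1, e2⟩ | ⟨m', e1, e2⟩
          · right; right; right; right
            refine ⟨by omega, ?_, ?_⟩
            · rw [carrierC_succ, carrierC_succ, hXm, hYm, hYs, h0, inc_zero, e1, e2]
            · rw [cnt_succ, cnt_succ, hc]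
              rw [if_neg (by rw [hYm, hYs, h0, inc_zero]; exact e4),
                if_neg (by rw [hXm, h0]; exact e3)]
          · right; right; right; left
            refine ⟨by omega, ⟨m', ?_, ?_⟩, ?_⟩
            · rw [carrierC_succ, hXm, h0, e1]
            · rw [carrierC_succ, hYm, hYs, h0, inc_zero, e2]
            · rw [cnt_succ, cnt_succ, hc]
              rw [if_neg (by rw [hYm, hYs, h0, inc_zero]; exact e4),
                if_neg (by rw [hXm, h0]; exact e3)]
        · have hc0 : 0 < X s := Nat.pos_of_ne_zero h0
          obtain ⟨e3, e4, ecase⟩ := step_C_pos m (X s) hc0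
          have hYs' : Y s = X s + 1 := by rw [hYs, inc_pos hc0]
          rcases ecase with ⟨e1, e2⟩ | ⟨m', e1, e2⟩
          · right; right; right; right
            refine ⟨by omega, ?_, ?_⟩
            · rw [carrierC_succ, carrierC_succ, hXm, hYm, hYs', e1, e2]
            · rw [cnt_succ, cnt_succ, hc]
              rw [if_pos (by rw [hYm, hYs']; exact e4), if_pos (by rw [hXm]; exact e3)]
          · right; right; right; left
            refine ⟨by omega, ⟨m', ?_, ?_⟩, ?_⟩
            · rw [carrierC_succ, hXm, e1]
            · rw [carrierC_succ, hYm, hYs', e2]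
            · rw [cnt_succ, cnt_succ, hc]
              rw [if_pos (by rw [hYm, hYs']; exact e4), if_pos (by rw [hXm]; exact e3)]
      · -- post-`INC` phase
        have hYs : Y s = inc (X s) := hYother s (by omega) (by omega)
        right; right; right; right
        refine ⟨by omega, ?_, ?_⟩
        · rw [carrierC_succ, carrierC_succ, hmap, hYs, capStep_incM _ hXne]
        · rw [cnt_succ, cnt_succ, hc]
          congr 1
          refine if_congr ?_ rfl rfl
          rw [hmap, hYs]
          exact exists_lt_incM
  -- conclude: both energies are the common count at the horizon
  have hPX : ∀ s, (∃ a ∈ carrierC j X s, a < X s) → s < N := by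
    intro s ⟨a, _, ha⟩
    by_contra h
    rw [hXN s (by omega)] at ha
    omega
  have hPY : ∀ s, (∃ a ∈ carrierC j Y s, a < Y s) → s < N := by
    intro s ⟨a, _, ha⟩
    by_contra h
    rw [hYN s (by omega)] at ha
    omega
  have hfinal : cnt j Y N = cnt j X N := by
    rcases key N with ⟨h1, _⟩ | ⟨_, h2, _⟩ | ⟨_, h2, _⟩ | ⟨_, _, h3⟩ | ⟨_, _, h3⟩
    · omega
    · omega
    · omega
    · exact h3
    · exact h3
  rw [energy_eq_cnt j X N hPX, energy_eq_cnt j Y N hPY]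
  omega
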